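/- For every integer n ≥ 2, pd(K_n) = ⌈n/2⌉. -/

import Mathlib

open SimpleGraph

variable {V : Type*}

/-- Two edges are adjacent: distinct and sharing an endpoint. -/
def EdgesAdj (e₁ e₂ : Sym2 V) : Prop := e₁ ≠ e₂ ∧ ∃ v, v ∈ e₁ ∧ v ∈ e₂

/-- `F` is an edge-cut of `G` separating `x` and `y`. -/
def IsSepCut (G : SimpleGraph V) (F : Set (Sym2 V)) (x y : V) : Prop :=
  F ⊆ G.edgeSet ∧ ¬ (G.deleteEdges F).Reachable x y

/-- `F` is a proper edge-cut (w.r.t. edge-coloring `c`) separating `x` and `y`. -/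
def IsProperSepCut (G : SimpleGraph V) (c : Sym2 V → ℕ) (F : Set (Sym2 V)) (x y : V) : Prop :=
  IsSepCut G F x y ∧ ∀ e₁ ∈ F, ∀ e₂ ∈ F, EdgesAdj e₁ e₂ → c e₁ ≠ c e₂

/-- `F` is a rainbow edge-cut separating `x` and `y`. -/
def IsRainbowSepCut (G : SimpleGraph V) (c : Sym2 V → ℕ) (F : Set (Sym2 V)) (x y : V) : Prop :=
  IsSepCut G F x y ∧ Set.InjOn c F

/-- `F` is a matching cut separating `x` and `y`. -/
def IsMatchingSepCut (G : SimpleGraph V) (F : Set (Sym2 V)) (x y : V) : Prop :=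
  IsSepCut G F x y ∧ ∀ e₁ ∈ F, ∀ e₂ ∈ F, ¬ EdgesAdj e₁ e₂

/-- The proper disconnection number. -/
noncomputable def pd (G : SimpleGraph V) : ℕ :=
  sInf {k | ∃ c : Sym2 V → ℕ, (∀ e ∈ G.edgeSet, c e < k) ∧
    ∀ x y : V, x ≠ y → ∃ F, IsProperSepCut G c F x y}

/-- The rainbow disconnection number. -/
noncomputable def rd (G : SimpleGraph V) : ℕ :=
  sInf {k | ∃ c : Sym2 V → ℕ, (∀ e ∈ G.edgeSet, c e < k) ∧
    ∀ x y : V, x ≠ y → ∃ F, IsRainbowSepCut G c F x y}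

/-- The chromatic index. -/
noncomputable def chromIndex (G : SimpleGraph V) : ℕ :=
  sInf {k | ∃ c : Sym2 V → ℕ, (∀ e ∈ G.edgeSet, c e < k) ∧
    ∀ e₁ ∈ G.edgeSet, ∀ e₂ ∈ G.edgeSet, EdgesAdj e₁ e₂ → c e₁ ≠ c e₂}


private lemma class_cases' {n k : ℕ} (hk : n ≤ 2*k) (hk0 : 0 < k) (v : Fin n) :
    (v:ℕ) = (v:ℕ)%k ∨ (v:ℕ) = (v:ℕ)%k + k := by
  have hlt : (v:ℕ) < 2*k := by have := v.isLt; omega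
  by_cases hv : (v:ℕ) < k
  · left; exact (Nat.mod_eq_of_lt hv).symm
  · right
    have h2 : ((v:ℕ) - k) % k = (v:ℕ) - k := Nat.mod_eq_of_lt (by omega)
    rw [Nat.mod_eq_sub_mod (by omega), h2]
    omega

private lemma val_eq_of_same_res' {n k : ℕ} (hk : n ≤ 2*k) (hk0 : 0 < k) (u v w : Fin n)
    (huv : (u:ℕ)%k = (v:ℕ)%k) (huw : (u:ℕ)%k = (w:ℕ)%k) (hvw : v ≠ w) : u = v ∨ u = w := by
  have hu := class_cases' hk hk0 u
  have hv := class_cases' hk hk0 v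
  have hw := class_cases' hk hk0 w
  have hvw' : (v:ℕ) ≠ (w:ℕ) := fun h => hvw (Fin.ext h)
  have : (u:ℕ) = (v:ℕ) ∨ (u:ℕ) = (w:ℕ) := by omega
  rcases this with h | h
  · exact Or.inl (Fin.ext h)
  · exact Or.inr (Fin.ext h)

private lemma lt_k_xor' {n k : ℕ} (hk : n ≤ 2*k) (hk0 : 0 < k) (v w : Fin n)
    (h : (v:ℕ)%k = (w:ℕ)%k) (hne : v ≠ w) : ((v:ℕ) < k ↔ ¬ ((w:ℕ) < k)) := by
  have hv := class_cases' hk hk0 v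
  have hw := class_cases' hk hk0 w
  have hm : (v:ℕ)%k < k := Nat.mod_lt _ hk0
  have hne' : (v:ℕ) ≠ (w:ℕ) := fun h => hne (Fin.ext h)
  omega

private lemma exists_sigma' {n k : ℕ} (hk : n ≤ 2*k) (x y : Fin n) (hxy : x ≠ y) :
    ∃ σ : Fin n → Bool, σ x = true ∧ σ y = false ∧
      ∀ v w : Fin n, v ≠ w → σ v = σ w → (v:ℕ) % k ≠ (w:ℕ) % k := by
  have hk0 : 0 < k := by have := x.isLt; omega
  refine ⟨fun v => if (v:ℕ)%k = (x:ℕ)%k then decide (v = x)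
      else if (v:ℕ)%k = (y:ℕ)%k then decide (¬ v = y) else decide ((v:ℕ) < k), ?_, ?_, ?_⟩
  · simp
  · by_cases h : (y:ℕ)%k = (x:ℕ)%k
    · simp only [if_pos h]
      exact decide_eq_false (fun h' => hxy h'.symm)
    · simp only [if_neg h, if_pos rfl]
      simp
  · intro v w hvw hσ hr
    by_cases hv : (v:ℕ)%k = (x:ℕ)%k
    · have hw : (w:ℕ)%k = (x:ℕ)%k := hr.symm.trans hv
      simp only [if_pos hv, if_pos hw, decide_eq_decide] at hσ
      rcases val_eq_of_same_res' hk hk0 x v w hv.symm hw.symm hvw with rfl | rfl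
      · exact hvw (hσ.mp rfl).symm
      · exact hvw (hσ.mpr rfl)
    · have hw : ¬ (w:ℕ)%k = (x:ℕ)%k := fun h => hv (hr.trans h)
      by_cases hv2 : (v:ℕ)%k = (y:ℕ)%k
      · have hw2 : (w:ℕ)%k = (y:ℕ)%k := hr.symm.trans hv2
        simp only [if_neg hv, if_neg hw, if_pos hv2, if_pos hw2, decide_eq_decide] at hσ
        rcases val_eq_of_same_res' hk hk0 y v w hv2.symm hw2.symm hvw with h | h
        · exact (hσ.mpr (fun hw' => hvw (h.symm.trans hw'.symm))) h.symm
        · exact (hσ.mp (fun hv' => hvw (hv'.trans h))) h.symm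
      · have hw2 : ¬ (w:ℕ)%k = (y:ℕ)%k := fun h => hv2 (hr.trans h)
        simp only [if_neg hv, if_neg hw, if_neg hv2, if_neg hw2, decide_eq_decide] at hσ
        have := lt_k_xor' hk hk0 v w hr hvw
        tauto

private lemma reach_side' {V : Type*} {G : SimpleGraph V} (σ : V → Bool)
    (h : ∀ u v, G.Adj u v → σ u = σ v) {x y : V} (hr : G.Reachable x y) : σ x = σ y := by
  obtain ⟨w⟩ := hr
  induction w with
  | nil => rfl
  | cons hadj _ ih => exact (h _ _ hadj).trans ih

theorem stmt3 (n : ℕ) (hn : 2 ≤ n) :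
    pd (⊤ : SimpleGraph (Fin n)) = (n + 1) / 2 := by
  classical
  set k := (n+1)/2 with hkdef
  have hk : n ≤ 2*k := by omega
  have hk0 : 0 < k := by omega
  have hmem : k ∈ {m | ∃ c : Sym2 (Fin n) → ℕ,
      (∀ e ∈ (⊤ : SimpleGraph (Fin n)).edgeSet, c e < m) ∧
      ∀ x y : Fin n, x ≠ y → ∃ F, IsProperSepCut ⊤ c F x y} := by
    refine ⟨Sym2.lift ⟨fun i j => ((i:ℕ)+(j:ℕ)) % k, fun i j => by simp [Nat.add_comm]⟩, ?_, ?_⟩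
    · intro e _
      induction e using Sym2.ind with
      | _ i j => exact Nat.mod_lt _ hk0
    · intro x y hxy
      obtain ⟨σ, hσx, hσy, hσ⟩ := exists_sigma' hk x y hxy
      set F : Set (Sym2 (Fin n)) := {e | ∃ a b : Fin n, σ a = true ∧ σ b = false ∧ e = s(a,b)}
        with hF
      have hFmem : ∀ a b : Fin n, σ a = true → σ b = false → s(a,b) ∈ F :=
        fun a b ha hb => ⟨a, b, ha, hb, rfl⟩
      refine ⟨F, ⟨?_, ?_⟩, ?_⟩
      · rintro e ⟨a, b, ha, hb, rfl⟩
        rw [SimpleGraph.mem_edgeSet, top_adj]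
        rintro rfl; rw [ha] at hb; exact Bool.noConfusion hb
      · intro hreach
        have key : ∀ u v : Fin n, ((⊤ : SimpleGraph (Fin n)).deleteEdges F).Adj u v →
            σ u = σ v := by
          intro u v huv
          rw [SimpleGraph.deleteEdges_adj] at huv
          cases hu : σ u <;> cases hv : σ v
          · rfl
          · exact absurd (by rw [Sym2.eq_swap]; exact hFmem v u hv hu) huv.2
          · exact absurd (hFmem u v hu hv) huv.2
          · rfl
        have := reach_side' σ key hreach
        rw [hσx, hσy] at this
        exact Bool.noConfusion this
      · rintro e₁ ⟨a₁, b₁, ha₁, hb₁, rfl⟩ e₂ ⟨a₂, b₂, ha₂, hb₂, rfl⟩ ⟨hne, v, hv₁, hv₂⟩ hc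
        rw [Sym2.mem_iff] at hv₁ hv₂
        simp only [Sym2.lift_mk] at hc
        rcases hv₁ with rfl | rfl <;> rcases hv₂ with rfl | rfl
        · have hmod : (b₁:ℕ) % k = (b₂:ℕ) % k := Nat.ModEq.add_left_cancel' (v:ℕ) hc
          have hbne : b₁ ≠ b₂ := fun h => hne (by rw [h])
          exact hσ b₁ b₂ hbne (hb₁.trans hb₂.symm) hmod
        · exact Bool.noConfusion (ha₁.symm.trans hb₂)
        · exact Bool.noConfusion (ha₂.symm.trans hb₁)
        · rw [Nat.add_comm (a₁:ℕ), Nat.add_comm (a₂:ℕ)] at hc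
          have hmod : (a₁:ℕ) % k = (a₂:ℕ) % k := Nat.ModEq.add_left_cancel' (v:ℕ) hc
          have hane : a₁ ≠ a₂ := fun h => hne (by rw [h])
          exact hσ a₁ a₂ hane (ha₁.trans ha₂.symm) hmod
  have hlb : ∀ m ∈ {m | ∃ c : Sym2 (Fin n) → ℕ,
      (∀ e ∈ (⊤ : SimpleGraph (Fin n)).edgeSet, c e < m) ∧
      ∀ x y : Fin n, x ≠ y → ∃ F, IsProperSepCut ⊤ c F x y}, k ≤ m := by
    rintro m ⟨c, hcol, hsep⟩
    have hxy : (⟨0, by omega⟩ : Fin n) ≠ ⟨1, by omega⟩ := by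
      simp [Fin.ext_iff]
    set x : Fin n := ⟨0, by omega⟩
    set y : Fin n := ⟨1, by omega⟩
    obtain ⟨F, ⟨hFsub, hFreach⟩, hprop⟩ := hsep x y hxy
    set G' := (⊤ : SimpleGraph (Fin n)).deleteEdges F with hG'
    set A : Finset (Fin n) := Finset.univ.filter (fun v => G'.Reachable x v) with hA
    have hmemA : ∀ v : Fin n, v ∈ A ↔ G'.Reachable x v := by
      intro v; simp [hA]
    have hxA : x ∈ A := (hmemA x).mpr (SimpleGraph.Reachable.refl x)
    have hyA : y ∉ A := fun h => hFreach ((hmemA y).mp h)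
    have hcut1 : ∀ b : Fin n, b ∉ A → s(x,b) ∈ F := by
      intro b hb
      by_contra hbF
      have hbx : x ≠ b := by rintro rfl; exact hb hxA
      have hadj : G'.Adj x b := by
        rw [hG', SimpleGraph.deleteEdges_adj]; exact ⟨hbx, hbF⟩
      exact hb ((hmemA b).mpr hadj.reachable)
    have hcut2 : ∀ a : Fin n, a ∈ A → s(y,a) ∈ F := by
      intro a ha
      by_contra haF
      have hay : y ≠ a := by rintro rfl; exact hyA ha
      have hadj : G'.Adj y a := by
        rw [hG', SimpleGraph.deleteEdges_adj]; exact ⟨hay, haF⟩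
      exact hFreach (((hmemA a).mp ha).trans hadj.symm.reachable)
    have h1 : Aᶜ.card ≤ m := by
      have := Finset.card_le_card_of_injOn (s := Aᶜ) (fun b => c s(x,b))
        (t := Finset.range m) ?_ ?_
      · simpa using this
      · intro b hb
        rw [Finset.mem_coe, Finset.mem_compl] at hb
        exact Finset.mem_range.mpr (hcol _ (hFsub (hcut1 b hb)))
      · intro b₁ hb₁ b₂ hb₂ hcc
        rw [Finset.mem_coe, Finset.mem_compl] at hb₁ hb₂
        by_contra hne
        have hE : s(x,b₁) ≠ s(x,b₂) := fun h => hne (Sym2.congr_right.mp h)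
        exact hprop _ (hcut1 b₁ hb₁) _ (hcut1 b₂ hb₂)
          ⟨hE, x, Sym2.mem_mk_left x b₁, Sym2.mem_mk_left x b₂⟩ hcc
    have h2 : A.card ≤ m := by
      have := Finset.card_le_card_of_injOn (s := A) (fun a => c s(y,a))
        (t := Finset.range m) ?_ ?_
      · simpa using this
      · intro a ha
        exact Finset.mem_range.mpr (hcol _ (hFsub (hcut2 a ha)))
      · intro a₁ ha₁ a₂ ha₂ hcc
        rw [Finset.mem_coe] at ha₁ ha₂
        by_contra hne
        have hE : s(y,a₁) ≠ s(y,a₂) := fun h => hne (Sym2.congr_right.mp h)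
        exact hprop _ (hcut2 a₁ ha₁) _ (hcut2 a₂ ha₂)
          ⟨hE, y, Sym2.mem_mk_left y a₁, Sym2.mem_mk_left y a₂⟩ hcc
    have hsum : A.card + Aᶜ.card = n := by
      rw [Finset.card_add_card_compl]; simp
    omega
  exact le_antisymm (Nat.sInf_le hmem) (le_csInf ⟨k, hmem⟩ hlb)
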